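/- arXiv:0910.2845 — 7 statements merged into one kernel-verified Lean document; each statement's English description precedes it below -/
import Mathlib

section
/- Let M be a finitely generated additive submonoid of ℤ^d, let E ⊆ M be a system of generators of M modulo U(M), and let x ∈ E. Suppose some y ∈ E reduces x, i.e. y ∉ U(M), y ≠ x, and x − y ∈ M. Then E \ {x} is again a system of generators of M modulo U(M). -/
/-- The unit group `U(M)` of an additive submonoid `M` of `ℤ^d`, as a set:
the elements `x ∈ M` with `-x ∈ M`. -/
def unitSet {d : ℕ} (M : AddSubmonoid (Fin d → ℤ)) : Set (Fin d → ℤ) :=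
  {x | x ∈ M ∧ -x ∈ M}

/-- `H` is a system of generators of `M` modulo `U(M)`: `H ⊆ M` and every element of `M`
is a finite sum of elements of `H` plus a unit, i.e. `M = ℤ₊H + U(M)`. -/
def IsGenModUnits {d : ℕ} (M : AddSubmonoid (Fin d → ℤ)) (H : Set (Fin d → ℤ)) : Prop :=
  H ⊆ (M : Set (Fin d → ℤ)) ∧
    ∀ m ∈ M, ∃ s ∈ AddSubmonoid.closure H, ∃ u ∈ unitSet M, m = s + u

/-- Any element of the monoid generated by `E` splits as `k • x + s'` with
`s'` in the monoid generated by `E \ {x}`. -/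
lemma decompose {d : ℕ} (E : Set (Fin d → ℤ)) (x : Fin d → ℤ) :
    ∀ z ∈ AddSubmonoid.closure E,
      ∃ k : ℕ, ∃ s' ∈ AddSubmonoid.closure (E \ {x}), z = k • x + s' := by
  intro z hz
  induction hz using AddSubmonoid.closure_induction with
  | mem w hw =>
    by_cases hwx : w = x
    · exact ⟨1, 0, (AddSubmonoid.closure (E \ {x})).zero_mem, by simp [hwx]⟩
    · exact ⟨0, w, AddSubmonoid.subset_closure ⟨hw, hwx⟩, by simp⟩
  | zero => exact ⟨0, 0, (AddSubmonoid.closure (E \ {x})).zero_mem, by simp⟩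
  | add a b _ _ ha hb =>
    obtain ⟨k1, s1, hs1, rfl⟩ := ha
    obtain ⟨k2, s2, hs2, rfl⟩ := hb
    refine ⟨k1 + k2, s1 + s2, (AddSubmonoid.closure (E \ {x})).add_mem hs1 hs2, ?_⟩
    rw [add_nsmul]; abel

theorem stmt0 {d : ℕ} (M : AddSubmonoid (Fin d → ℤ)) (hFG : M.FG)
    (E : Set (Fin d → ℤ)) (hE : IsGenModUnits M E)
    (x : Fin d → ℤ) (hx : x ∈ E)
    (y : Fin d → ℤ) (hy : y ∈ E)
    (hyU : y ∉ unitSet M) (hyx : y ≠ x) (hxy : x - y ∈ M) :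
    IsGenModUnits M (E \ {x}) := by
  obtain ⟨hEM, hgen⟩ := hE
  have hsubM : AddSubmonoid.closure (E \ {x}) ≤ M :=
    AddSubmonoid.closure_le.2 (fun w hw => hEM hw.1)
  -- Decompose x - y
  obtain ⟨s, hs, u, hu, heq⟩ := hgen (x - y) hxy
  obtain ⟨k, s', hs', rfl⟩ := decompose E x s hs
  cases k with
  | succ k' =>
    exfalso
    have h2 : -y = k' • x + s' + u := by
      have h1 : x - y = x + (k' • x + s' + u) := by rw [heq, succ_nsmul]; abel
      calc -y = (x - y) - x := by abel
        _ = k' • x + s' + u := by rw [h1]; abel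
    exact hyU ⟨hEM hy, h2 ▸ M.add_mem (M.add_mem (M.nsmul_mem (hEM hx) k') (hsubM hs')) hu.1⟩
  | zero =>
    -- x = (y + s') + u
    have hxrep : x = (y + s') + u := by
      have : x - y = s' + u := by simpa using heq
      calc x = y + (x - y) := by abel
        _ = (y + s') + u := by rw [this]; abel
    have hys' : y + s' ∈ AddSubmonoid.closure (E \ {x}) :=
      (AddSubmonoid.closure (E \ {x})).add_mem (AddSubmonoid.subset_closure ⟨hy, hyx⟩) hs'
    refine ⟨fun w hw => hEM hw.1, fun m hm => ?_⟩
    obtain ⟨t, ht, v, hv, rfl⟩ := hgen m hm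
    obtain ⟨k, t', ht', rfl⟩ := decompose E x t ht
    refine ⟨k • (y + s') + t', ?_, k • u + v, ?_, ?_⟩
    · exact (AddSubmonoid.closure (E \ {x})).add_mem
        ((AddSubmonoid.closure (E \ {x})).nsmul_mem hys' k) ht'
    · refine ⟨M.add_mem (M.nsmul_mem hu.1 k) hv.1, ?_⟩
      have : -(k • u + v) = k • (-u) + (-v) := by rw [smul_neg]; abel
      exact this ▸ M.add_mem (M.nsmul_mem hu.2 k) hv.2
    · rw [hxrep, smul_add, smul_add]; abel
end

section
/- Let G be a subgroup of ℤ^d, let σ₁,…,σ_s : ℤ^d → ℤ be group homomorphisms, and let M = {x ∈ G : σᵢ(x) ≥ 0 for all i = 1,…,s}; assume M is finitely generated. Let σ : ℤ^d → ℤ^s be the map σ(x) = (σ₁(x),…,σ_s(x)), so that σ(M) is a submonoid of ℤ₊^s. Then a subset H ⊆ M is a Hilbert basis of M if and only if σ is injective on H and σ(H) is a Hilbert basis of the monoid σ(M). -/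
/-- `H` is a Hilbert basis of `M`. -/
def IsHilbertBasis {d : ℕ} (M : AddSubmonoid (Fin d → ℤ)) (H : Set (Fin d → ℤ)) : Prop :=
  IsGenModUnits M H ∧ ∀ H' ⊆ H, IsGenModUnits M H' → H' = H

/-- The standard map `σ = (σ₁, …, σ_s) : ℤ^d → ℤ^s` assembled from the linear forms `σᵢ`. -/
def standardMap {d s : ℕ} (σ : Fin s → ((Fin d → ℤ) →+ ℤ)) :
    (Fin d → ℤ) →+ (Fin s → ℤ) where
  toFun x := fun i => σ i x
  map_zero' := by funext i; simp
  map_add' x y := by funext i; simp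

theorem stmt2 {d s : ℕ} (G : AddSubgroup (Fin d → ℤ))
    (σ : Fin s → ((Fin d → ℤ) →+ ℤ))
    (M : AddSubmonoid (Fin d → ℤ))
    (hM : (M : Set (Fin d → ℤ)) = {x | x ∈ G ∧ ∀ i, 0 ≤ σ i x})
    (hFG : M.FG)
    (H : Set (Fin d → ℤ)) (hH : H ⊆ (M : Set (Fin d → ℤ))) :
    IsHilbertBasis M H ↔
      (Set.InjOn (standardMap σ) H ∧
        IsHilbertBasis (M.map (standardMap σ)) (standardMap σ '' H)) := by
  set f := standardMap σ with hfdef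
  have hMmem : ∀ x, x ∈ M ↔ x ∈ G ∧ ∀ i, 0 ≤ σ i x := fun x =>
    (SetLike.mem_coe (p := M) (x := x)).symm.trans (Set.ext_iff.mp hM x)
  have hfapp : ∀ x i, f x i = σ i x := fun x i => rfl
  -- units of M are kernel elements
  have hunit : ∀ x, x ∈ unitSet M ↔ x ∈ M ∧ f x = 0 := by
    intro x
    constructor
    · rintro ⟨hx, hnx⟩
      refine ⟨hx, funext fun i => ?_⟩
      have h1 := ((hMmem x).mp hx).2 i
      have h2 := ((hMmem (-x)).mp hnx).2 i
      rw [map_neg] at h2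
      show σ i x = 0
      omega
    · rintro ⟨hx, hfx⟩
      refine ⟨hx, (hMmem (-x)).mpr ⟨neg_mem (((hMmem x).mp hx).1), fun i => ?_⟩⟩
      have h0 : σ i x = 0 := congrFun hfx i
      rw [map_neg, h0]; exact le_of_eq neg_zero.symm
  -- units of N are trivial
  have hunitN : unitSet (M.map f) = {0} := by
    ext y
    simp only [unitSet, Set.mem_setOf_eq, Set.mem_singleton_iff, AddSubmonoid.mem_map]
    constructor
    · rintro ⟨⟨m, hm, rfl⟩, ⟨m', hm', hm'eq⟩⟩
      funext i
      have h1 := ((hMmem m).mp hm).2 i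
      have h2 := ((hMmem m').mp hm').2 i
      have h3 := congrFun hm'eq i
      have h4 : σ i m' = -(σ i m) := h3
      show σ i m = 0
      omega
    · rintro rfl
      exact ⟨⟨0, zero_mem _, map_zero f⟩, ⟨0, zero_mem _, by simp⟩⟩
  -- generation equivalence
  have hgen : ∀ H' ⊆ (M : Set (Fin d → ℤ)),
      (IsGenModUnits M H' ↔ IsGenModUnits (M.map f) (f '' H')) := by
    intro H' hH'
    constructor
    · rintro ⟨-, hg⟩
      constructor
      · rintro y ⟨x, hx, rfl⟩
        exact AddSubmonoid.mem_map.mpr ⟨x, hH' hx, rfl⟩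
      · intro n hn
        rw [AddSubmonoid.mem_map] at hn
        obtain ⟨m, hm, rfl⟩ := hn
        obtain ⟨t, ht, u, hu, rfl⟩ := hg m hm
        refine ⟨f t, ?_, 0, ?_, ?_⟩
        · rw [← AddMonoidHom.map_mclosure]
          exact AddSubmonoid.mem_map.mpr ⟨t, ht, rfl⟩
        · rw [hunitN]; rfl
        · have hu0 : f u = 0 := ((hunit u).mp hu).2
          rw [map_add, hu0]
    · rintro ⟨-, hg⟩
      refine ⟨hH', fun m hm => ?_⟩
      obtain ⟨t, ht, u, hu, heq⟩ := hg (f m) (AddSubmonoid.mem_map.mpr ⟨m, hm, rfl⟩)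
      rw [hunitN, Set.mem_singleton_iff] at hu
      subst hu
      rw [add_zero] at heq
      rw [← AddMonoidHom.map_mclosure, AddSubmonoid.mem_map] at ht
      obtain ⟨t', ht', rfl⟩ := ht
      have hclM : AddSubmonoid.closure H' ≤ M := AddSubmonoid.closure_le.mpr hH'
      have htM : t' ∈ M := hclM ht'
      have hsub : f (m - t') = 0 := by rw [map_sub, heq, sub_self]
      refine ⟨t', ht', m - t', (hunit _).mpr ⟨?_, hsub⟩, by ring⟩
      exact (hMmem _).mpr ⟨sub_mem ((hMmem m).mp hm).1 ((hMmem t').mp htM).1,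
        fun i => le_of_eq (congrFun hsub i).symm⟩
  constructor
  · rintro ⟨hgenH, hmin⟩
    have hinj : Set.InjOn f H := by
      intro x hx y hy hxy
      by_contra hne
      have himg : f '' (H \ {y}) = f '' H := by
        refine Set.Subset.antisymm (Set.image_mono Set.diff_subset) ?_
        rintro _ ⟨z, hz, rfl⟩
        by_cases hzy : z = y
        · subst hzy
          exact ⟨x, ⟨hx, fun h => hne (Set.mem_singleton_iff.mp h)⟩, hxy⟩
        · exact ⟨z, ⟨hz, hzy⟩, rfl⟩
      have hgen' : IsGenModUnits M (H \ {y}) := by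
        refine (hgen _ (Set.diff_subset.trans hH)).mpr ?_
        rw [himg]
        exact (hgen H hH).mp hgenH
      have heq := hmin (H \ {y}) Set.diff_subset hgen'
      have : y ∈ H \ {y} := by rw [heq]; exact hy
      exact this.2 rfl
    refine ⟨hinj, (hgen H hH).mp hgenH, ?_⟩
    intro K hK hKgen
    have hH'sub : {h ∈ H | f h ∈ K} ⊆ H := Set.sep_subset _ _
    have himg : f '' {h ∈ H | f h ∈ K} = K := by
      refine Set.Subset.antisymm ?_ ?_
      · rintro _ ⟨z, ⟨hz1, hz2⟩, rfl⟩; exact hz2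
      · intro k hk
        obtain ⟨h, hh, rfl⟩ := hK hk
        exact ⟨h, ⟨hh, hk⟩, rfl⟩
    have hgen' : IsGenModUnits M {h ∈ H | f h ∈ K} := by
      refine (hgen _ (hH'sub.trans hH)).mpr ?_
      rw [himg]; exact hKgen
    have hEq := hmin _ hH'sub hgen'
    rw [← himg, hEq]
  · rintro ⟨hinj, hgenImg, hminImg⟩
    refine ⟨(hgen H hH).mpr hgenImg, ?_⟩
    intro H' hH' hH'gen
    have hg' : IsGenModUnits (M.map f) (f '' H') := (hgen H' (hH'.trans hH)).mp hH'gen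
    have himgeq : f '' H' = f '' H := hminImg _ (Set.image_mono hH') hg'
    refine Set.Subset.antisymm hH' ?_
    intro h hh
    have : f h ∈ f '' H' := himgeq ▸ ⟨h, hh, rfl⟩
    obtain ⟨h', hh', heq⟩ := this
    have := hinj (hH' hh') hh heq
    subst this
    exact hh'
end

section
/- Let M ⊆ N be additive submonoids of ℚ^d, and let C = ℝ₊M ⊆ ℝ^d be the set of all finite linear combinations of elements of M with nonnegative real coefficients. Then the integral closure of M in N, namely {y ∈ N : k·y ∈ M for some positive integer k}, equals C ∩ N. -/
open Matrix

/-- The canonical embedding `ℚ^d → ℝ^d`. -/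
noncomputable def ratToReal {d : ℕ} (x : Fin d → ℚ) : Fin d → ℝ :=
  fun i => (x i : ℝ)

/-- `ℝ₊M ⊆ ℝ^d`: all finite linear combinations of elements of `M ⊆ ℚ^d`
with nonnegative real coefficients. -/
def realCone {d : ℕ} (M : AddSubmonoid (Fin d → ℚ)) : Set (Fin d → ℝ) :=
  {y | ∃ (n : ℕ) (c : Fin n → ℝ) (v : Fin n → (Fin d → ℚ)),
    (∀ i, 0 ≤ c i) ∧ (∀ i, v i ∈ M) ∧ y = ∑ i, c i • ratToReal (v i)}

lemma ratToReal_injective {d : ℕ} : Function.Injective (ratToReal (d := d)) := by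
  intro x y h
  funext i
  have := congrFun h i
  simp only [ratToReal] at this
  exact_mod_cast this

lemma ratToReal_sum {d n : ℕ} (q : Fin n → ℚ) (v : Fin n → Fin d → ℚ) :
    ratToReal (∑ i, q i • v i) = ∑ i, (q i : ℝ) • ratToReal (v i) := by
  funext j
  simp only [ratToReal, Finset.sum_apply, Pi.smul_apply, smul_eq_mul, Rat.cast_sum,
    Rat.cast_mul]

/-- If a rational vector is a real combination of rational vectors whose real images are
linearly independent, then the coefficients are rational. -/
lemma ratSolve {d n : ℕ} (v : Fin n → Fin d → ℚ) (y : Fin d → ℚ) (c : Fin n → ℝ)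
    (hind : ∀ x : Fin n → ℝ, ∑ i, x i • ratToReal (v i) = 0 → x = 0)
    (hy : ratToReal y = ∑ i, c i • ratToReal (v i)) :
    ∃ q : Fin n → ℚ, (∀ i, (q i : ℝ) = c i) ∧ y = ∑ i, q i • v i := by
  classical
  set f : ℚ →+* ℝ := Rat.castHom ℝ with hf
  set Aq : Matrix (Fin d) (Fin n) ℚ := Matrix.of (fun j i => v i j) with hAq
  set Ar : Matrix (Fin d) (Fin n) ℝ := Aq.map f with hAr
  have hmul : ∀ x : Fin n → ℝ, Ar *ᵥ x = ∑ i, x i • ratToReal (v i) := by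
    intro x
    funext j
    simp [hAr, hAq, Matrix.mulVec, dotProduct, ratToReal, Finset.sum_apply,
      mul_comm, Matrix.map_apply]
  have hmapVec : ∀ (m k : ℕ) (B : Matrix (Fin m) (Fin k) ℚ) (x : Fin k → ℚ),
      (B.map f) *ᵥ (fun i => f (x i)) = fun j => f ((B *ᵥ x) j) := by
    intro m k B x
    funext j
    rw [RingHom.map_mulVec]
    rfl
  have hkerA : ∀ x : Fin n → ℝ, Ar *ᵥ x = 0 → x = 0 := by
    intro x hx
    exact hind x (by rw [← hmul]; exact hx)
  have hkerG : ∀ x : Fin n → ℝ, (Arᵀ * Ar) *ᵥ x = 0 → x = 0 := by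
    intro x hx
    apply hkerA
    have h1 : x ⬝ᵥ ((Arᵀ * Ar) *ᵥ x) = 0 := by rw [hx, dotProduct_zero]
    rwa [← Matrix.mulVec_mulVec, Matrix.dotProduct_mulVec, Matrix.vecMul_transpose,
      dotProduct_self_eq_zero] at h1
  have hdetR : (Arᵀ * Ar).det ≠ 0 := by
    intro h
    obtain ⟨w, hw0, hw⟩ := Matrix.exists_mulVec_eq_zero_iff.mpr h
    exact hw0 (hkerG w hw)
  have hmapG : (Aqᵀ * Aq).map f = Arᵀ * Ar := by
    rw [Matrix.map_mul, Matrix.transpose_map, hAr]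
  have hdetQ : (Aqᵀ * Aq).det ≠ 0 := by
    intro h
    apply hdetR
    rw [← hmapG, ← RingHom.mapMatrix_apply, ← RingHom.map_det, h, map_zero]
  set Gq : Matrix (Fin n) (Fin n) ℚ := Aqᵀ * Aq with hGq
  have hGu : IsUnit Gq.det := isUnit_iff_ne_zero.mpr hdetQ
  set q : Fin n → ℚ := Gq⁻¹ *ᵥ (Aqᵀ *ᵥ y) with hqdef
  have hGqq : Gq *ᵥ q = Aqᵀ *ᵥ y := by
    rw [hqdef, Matrix.mulVec_mulVec, Matrix.mul_nonsing_inv _ hGu, Matrix.one_mulVec]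
  have hyr : Ar *ᵥ c = ratToReal y := by rw [hmul, hy]
  have hfy : (fun j => f (y j)) = ratToReal y := rfl
  have hGrq : (Arᵀ * Ar) *ᵥ (fun i => f (q i)) = Arᵀ *ᵥ ratToReal y := by
    rw [← hmapG, hmapVec n n Gq q, hGq]
    have := hmapVec n d Aqᵀ y
    rw [Matrix.transpose_map] at this
    rw [hGqq]
    calc (fun j => f ((Aqᵀ *ᵥ y) j))
        = (Aqᵀ.map f) *ᵥ (fun i => f (y i)) := (hmapVec n d Aqᵀ y).symm
      _ = Arᵀ *ᵥ ratToReal y := by rw [Matrix.transpose_map, hfy]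
  have hGrc : (Arᵀ * Ar) *ᵥ c = Arᵀ *ᵥ ratToReal y := by
    rw [← Matrix.mulVec_mulVec, hyr]
  have hceq : c = fun i => f (q i) := by
    have hz : (Arᵀ * Ar) *ᵥ (c - fun i => f (q i)) = 0 := by
      rw [Matrix.mulVec_sub, hGrc, hGrq, sub_self]
    have := hkerG _ hz
    exact sub_eq_zero.mp this
  refine ⟨q, fun i => (congrFun hceq i).symm, ?_⟩
  apply ratToReal_injective
  rw [ratToReal_sum, hy]
  exact Finset.sum_congr rfl fun i _ => by rw [congrFun hceq i]; rfl

/-- A nonnegative rational combination of elements of `M` is integral over `M`. -/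
lemma ratCombo_integral {d n : ℕ} (M : AddSubmonoid (Fin d → ℚ)) (q : Fin n → ℚ)
    (v : Fin n → Fin d → ℚ) (y : Fin d → ℚ) (hq : ∀ i, 0 ≤ q i) (hv : ∀ i, v i ∈ M)
    (hy : y = ∑ i, q i • v i) : ∃ k : ℕ, 0 < k ∧ k • y ∈ M := by
  classical
  refine ⟨∏ i, (q i).den, Finset.prod_pos (fun i _ => (q i).pos), ?_⟩
  set k : ℕ := ∏ i, (q i).den with hk
  have hky : k • y = ∑ i, ((k : ℚ) * q i) • v i := by
    rw [hy, Finset.smul_sum]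
    refine Finset.sum_congr rfl fun i _ => ?_
    rw [← Nat.cast_smul_eq_nsmul ℚ, smul_smul]
  rw [hky]
  refine AddSubmonoid.sum_mem M fun i _ => ?_
  obtain ⟨t, ht⟩ : (q i).den ∣ k := Finset.dvd_prod_of_mem _ (Finset.mem_univ i)
  have hden : ((q i).den : ℚ) * q i = ((q i).num : ℚ) := by
    rw [mul_comm]
    nth_rewrite 1 [← Rat.num_div_den (q i)]
    exact div_mul_cancel₀ _ (by exact_mod_cast (q i).den_ne_zero)
  have hnum : 0 ≤ (q i).num := Rat.num_nonneg.mpr (hq i)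
  have hcoef : (k : ℚ) * q i = ((t * (q i).num.toNat : ℕ) : ℚ) := by
    rw [ht]
    push_cast [Int.toNat_of_nonneg hnum]
    rw [mul_comm ((q i).den : ℚ) (t : ℚ), mul_assoc, hden]
    congr 1
    exact_mod_cast (Int.toNat_of_nonneg hnum).symm
  rw [hcoef, Nat.cast_smul_eq_nsmul]
  exact AddSubmonoid.nsmul_mem M (hv i) _

/-- Key lemma: a rational vector in the real cone of `M` is integral over `M`. -/
lemma key {d : ℕ} (M : AddSubmonoid (Fin d → ℚ)) :
    ∀ (n : ℕ) (c : Fin n → ℝ) (v : Fin n → Fin d → ℚ) (y : Fin d → ℚ),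
      (∀ i, 0 ≤ c i) → (∀ i, v i ∈ M) → ratToReal y = ∑ i, c i • ratToReal (v i) →
      ∃ k : ℕ, 0 < k ∧ k • y ∈ M := by
  intro n
  induction n with
  | zero =>
    intro c v y _ _ hy
    have : y = 0 := by
      apply ratToReal_injective
      rw [hy]
      simp
      funext j
      simp [ratToReal]
    exact ⟨1, one_pos, by simp [this, AddSubmonoid.zero_mem]⟩
  | succ n ih =>
    intro c v y hc hv hy
    by_cases hind : ∀ x : Fin (n + 1) → ℝ, ∑ i, x i • ratToReal (v i) = 0 → x = 0
    · obtain ⟨q, hqc, hqy⟩ := ratSolve v y c hind hy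
      exact ratCombo_integral M q v y (fun i => by
        have := hqc i; rw [← Rat.cast_nonneg (K := ℝ), this]; exact hc i) hv hqy
    · push_neg at hind
      obtain ⟨g₀, hg₀sum, hg₀ne⟩ := hind
      obtain ⟨i1, hi1⟩ : ∃ i, g₀ i ≠ 0 := by
        by_contra h
        push_neg at h
        exact hg₀ne (funext h)
      obtain ⟨g, hgsum, hi1pos⟩ :
          ∃ g : Fin (n + 1) → ℝ, (∑ i, g i • ratToReal (v i) = 0) ∧ 0 < g i1 := by
        rcases hi1.lt_or_gt with hneg | hpos
        · refine ⟨-g₀, ?_, by simpa using hneg⟩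
          simp only [Pi.neg_apply, neg_smul, Finset.sum_neg_distrib, hg₀sum, neg_zero]
        · exact ⟨g₀, hg₀sum, hpos⟩
      classical
      set S : Finset (Fin (n + 1)) := Finset.univ.filter (fun i => 0 < g i) with hS
      have hi1S : i1 ∈ S := by simp [hS, hi1pos]
      obtain ⟨i0, hi0S, hmin⟩ := S.exists_min_image (fun i => c i / g i) ⟨i1, hi1S⟩
      have hgi0 : 0 < g i0 := by simpa [hS] using hi0S
      set t : ℝ := c i0 / g i0 with htdef
      have ht0 : 0 ≤ t := div_nonneg (hc i0) hgi0.le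
      set c' : Fin (n + 1) → ℝ := fun i => c i - t * g i with hc'
      have hc'nonneg : ∀ i, 0 ≤ c' i := by
        intro i
        by_cases hgi : 0 < g i
        · have hiS : i ∈ S := by simp [hS, hgi]
          have hle : t ≤ c i / g i := hmin i hiS
          have : t * g i ≤ c i := (le_div_iff₀ hgi).mp hle
          simp only [hc']
          linarith
        · push_neg at hgi
          have : t * g i ≤ 0 := mul_nonpos_of_nonneg_of_nonpos ht0 hgi
          have := sub_nonneg.mpr (this.trans (hc i))
          simp only [hc']
          linarith [hc i, mul_nonpos_of_nonneg_of_nonpos ht0 hgi]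
      have hc'i0 : c' i0 = 0 := by
        simp only [hc', htdef]
        rw [div_mul_cancel₀ _ (ne_of_gt hgi0), sub_self]
      have hy' : ratToReal y = ∑ i, c' i • ratToReal (v i) := by
        simp only [hc', sub_smul, Finset.sum_sub_distrib]
        have hts : ∑ x : Fin (n + 1), (t * g x) • ratToReal (v x)
            = t • ∑ x : Fin (n + 1), g x • ratToReal (v x) := by
          rw [Finset.smul_sum]
          exact Finset.sum_congr rfl fun x _ => (smul_smul t (g x) _).symm
        rw [hts, hgsum, smul_zero, sub_zero, hy]
      have hy'' : ratToReal y = ∑ j : Fin n, c' (i0.succAbove j) • ratToReal (v (i0.succAbove j)) := by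
        rw [hy', Fin.sum_univ_succAbove _ i0, hc'i0, zero_smul, zero_add]
      exact ih (fun j => c' (i0.succAbove j)) (fun j => v (i0.succAbove j)) y
        (fun j => hc'nonneg _) (fun j => hv _) hy''

theorem stmt3 {d : ℕ} (M N : AddSubmonoid (Fin d → ℚ)) (hMN : M ≤ N) :
    {y : Fin d → ℚ | y ∈ N ∧ ∃ k : ℕ, 0 < k ∧ k • y ∈ M} =
      {y : Fin d → ℚ | y ∈ N ∧ ratToReal y ∈ realCone M} := by
  ext y
  simp only [Set.mem_setOf_eq]
  constructor
  · rintro ⟨hN, k, hk, hkM⟩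
    refine ⟨hN, 1, fun _ => (k : ℝ)⁻¹, fun _ => k • y, fun _ => by positivity, fun _ => hkM, ?_⟩
    rw [Fin.sum_univ_one]
    funext j
    have hk' : (k : ℝ) ≠ 0 := Nat.cast_ne_zero.mpr hk.ne'
    simp only [ratToReal, Pi.smul_apply, smul_eq_mul]
    field_simp
    simp only [nsmul_eq_mul, Rat.cast_mul, Rat.cast_natCast]
    ring
  · rintro ⟨hN, n, c, v, hc, hv, hy⟩
    exact ⟨hN, key M n c v y hc hv hy⟩
end

section
/- Let x₁,…,xₙ ∈ ℝ^d, let C = ℝ₊x₁ + ⋯ + ℝ₊xₙ and C' = ℝ₊x₁ + ⋯ + ℝ₊x_{n−1}. Suppose λ₁,…,λ_m are linear forms on ℝ^d such that C' = {x ∈ ℝ^d : λᵢ(x) ≥ 0 for i = 1,…,m}. Put P = {λᵢ : λᵢ(xₙ) > 0}, N = {λᵢ : λᵢ(xₙ) < 0}, and Z = {λᵢ : λᵢ(xₙ) = 0}. Then C = {x ∈ ℝ^d : μ(x) ≥ 0 for every μ ∈ P ∪ Z ∪ {λᵢ(xₙ)·λⱼ − λⱼ(xₙ)·λᵢ : λᵢ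 ∈ P, λⱼ ∈ N}}. -/
/-- The cone `ℝ₊x₁ + ⋯ + ℝ₊xₙ` generated by the vectors `x i`. -/
def rcone {n d : ℕ} (x : Fin n → (Fin d → ℝ)) : Set (Fin d → ℝ) :=
  {y | ∃ c : Fin n → ℝ, (∀ i, 0 ≤ c i) ∧ y = ∑ i, c i • x i}

/-- Fourier–Motzkin elimination: the transformation of the support hyperplanes of
`C' = ℝ₊x₁ + ⋯ + ℝ₊x_{n-1}` into those of `C = ℝ₊x₁ + ⋯ + ℝ₊xₙ`. -/
theorem stmt5 {d n m : ℕ} (x : Fin (n + 1) → (Fin d → ℝ))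
    (lam : Fin m → ((Fin d → ℝ) →ₗ[ℝ] ℝ))
    (hC' : rcone (fun i : Fin n => x i.castSucc) = {y | ∀ i, 0 ≤ lam i y}) :
    rcone x =
      {y | ∀ μ ∈
        ({l | ∃ i, 0 < lam i (x (Fin.last n)) ∧ l = lam i} ∪
         {l | ∃ i, lam i (x (Fin.last n)) = 0 ∧ l = lam i} ∪
         {l | ∃ i j, 0 < lam i (x (Fin.last n)) ∧ lam j (x (Fin.last n)) < 0 ∧
            l = lam i (x (Fin.last n)) • lam j - lam j (x (Fin.last n)) • lam i} :
          Set ((Fin d → ℝ) →ₗ[ℝ] ℝ)),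
        0 ≤ μ y} := by
  set v := x (Fin.last n) with hv
  have hmem : ∀ z, z ∈ rcone (fun i : Fin n => x i.castSucc) ↔ ∀ i, 0 ≤ lam i z := by
    intro z; rw [hC']; rfl
  have key : ∀ y, y ∈ rcone x ↔
      ∃ t, 0 ≤ t ∧ ∀ i, t * lam i v ≤ lam i y := by
    intro y
    constructor
    · rintro ⟨c, hc, rfl⟩
      refine ⟨c (Fin.last n), hc _, fun i => ?_⟩
      have h' : (∑ j : Fin n, c j.castSucc • x j.castSucc) ∈
          rcone (fun i : Fin n => x i.castSucc) :=
        ⟨fun j => c j.castSucc, fun j => hc _, rfl⟩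
      have := (hmem _).1 h' i
      rw [Fin.sum_univ_castSucc]
      have : lam i (∑ j : Fin n, c j.castSucc • x j.castSucc
          + c (Fin.last n) • v) =
          lam i (∑ j : Fin n, c j.castSucc • x j.castSucc)
          + c (Fin.last n) * lam i v := by
        rw [map_add, map_smul]; rfl
      rw [this]
      nlinarith [(hmem _).1 h' i]
    · rintro ⟨t, ht, h⟩
      have h' : (y - t • v) ∈ rcone (fun i : Fin n => x i.castSucc) := by
        rw [hmem]
        intro i
        have : lam i (y - t • v) = lam i y - t * lam i v := by
          rw [map_sub, map_smul]; rfl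
        rw [this]; linarith [h i]
      obtain ⟨c, hc, hy⟩ := h'
      refine ⟨Fin.snoc c t, ?_, ?_⟩
      · intro i
        refine Fin.lastCases ?_ ?_ i
        · simpa using ht
        · intro i; simpa using hc i
      · rw [Fin.sum_univ_castSucc]
        simp only [Fin.snoc_castSucc, Fin.snoc_last]
        have : y = (y - t • v) + t • v := by abel
        rw [this, hy]
  ext y
  simp only [Set.mem_setOf_eq, key y, Set.mem_union]
  constructor
  · rintro ⟨t, ht, h⟩ μ hμ
    rcases hμ with (⟨i, hi, rfl⟩ | ⟨i, hi, rfl⟩) | ⟨i, j, hi, hj, rfl⟩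
    · nlinarith [h i]
    · nlinarith [h i]
    · have hli : t * lam i v ≤ lam i y := h i
      have hlj : t * lam j v ≤ lam j y := h j
      have : (lam i v • lam j - lam j v • lam i) y
          = lam i v * lam j y - lam j v * lam i y := by
        simp [smul_eq_mul]
      rw [this]
      nlinarith
  · intro H
    have hP : ∀ i, 0 < lam i v → 0 ≤ lam i y := fun i hi =>
      H (lam i) (Or.inl (Or.inl ⟨i, hi, rfl⟩))
    have hZ : ∀ i, lam i v = 0 → 0 ≤ lam i y := fun i hi =>
      H (lam i) (Or.inl (Or.inr ⟨i, hi, rfl⟩))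
    have hM : ∀ i j, 0 < lam i v → lam j v < 0 →
        0 ≤ lam i v * lam j y - lam j v * lam i y := by
      intro i j hi hj
      have := H _ (Or.inr ⟨i, j, hi, hj, rfl⟩)
      simpa [smul_eq_mul] using this
    set S := Finset.univ.filter (fun j : Fin m => lam j v < 0) with hS
    by_cases hSne : S.Nonempty
    · set t := max 0 (S.sup' hSne (fun j => lam j y / lam j v)) with htdef
      refine ⟨t, le_max_left _ _, fun k => ?_⟩
      rcases lt_trichotomy (lam k v) 0 with hk | hk | hk
      · have hkS : k ∈ S := by simp [hS, hk]
        have h1 : lam k y / lam k v ≤ t :=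
          le_trans (Finset.le_sup' (fun j => lam j y / lam j v) hkS) (le_max_right _ _)
        have := mul_le_mul_of_nonpos_right h1 (le_of_lt hk)
        rwa [div_mul_cancel₀ _ (ne_of_lt hk)] at this
      · rw [hk, mul_zero]; exact hZ k hk
      · rw [← le_div_iff₀ hk]
        refine max_le ?_ ?_
        · exact div_nonneg (hP k hk) (le_of_lt hk)
        · refine Finset.sup'_le _ _ fun j hj => ?_
          have hjneg : lam j v < 0 := by simpa [hS] using hj
          rw [le_div_iff₀ hk, div_mul_eq_mul_div, div_le_iff_of_neg hjneg]
          nlinarith [hM k j hk hjneg]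
    · refine ⟨0, le_refl _, fun k => ?_⟩
      rw [zero_mul]
      rcases lt_trichotomy (lam k v) 0 with hk | hk | hk
      · exact absurd ⟨k, by simp [hS, hk]⟩ hSne
      · exact hZ k hk
      · exact hP k hk
end

section
/- Let v₁,…,v_d ∈ ℤ^d be linearly independent over ℝ, D = ℝ₊v₁ + ⋯ + ℝ₊v_d, and E = par(v₁,…,v_d) ∩ ℤ^d. A point z ∈ ℤ^d lies in the topological interior of D in ℝ^d if and only if there exist x ∈ E and a₁,…,a_d ∈ ℤ₊ with z = (v₁ + ⋯ + v_d − x) + a₁v₁ + ⋯ + a_dv_d; moreover, such x and (a₁,…,a_d) are unique. -/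
/-- The canonical embedding `ℤ^d → ℝ^d`. -/
noncomputable def intToReal {d : ℕ} (x : Fin d → ℤ) : Fin d → ℝ :=
  fun i => (x i : ℝ)

/-- The simplicial cone `D = ℝ₊v₁ + ⋯ + ℝ₊v_d ⊆ ℝ^d`. -/
def simpCone {d : ℕ} (v : Fin d → (Fin d → ℤ)) : Set (Fin d → ℝ) :=
  {y | ∃ c : Fin d → ℝ, (∀ i, 0 ≤ c i) ∧ y = ∑ i, c i • intToReal (v i)}

/-- The semi-open parallelotope `par(v₁,…,v_d)`. -/
def parSet {d : ℕ} (v : Fin d → (Fin d → ℤ)) : Set (Fin d → ℝ) :=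
  {y | ∃ c : Fin d → ℝ, (∀ i, 0 ≤ c i ∧ c i < 1) ∧ y = ∑ i, c i • intToReal (v i)}

/-- `E = par(v₁,…,v_d) ∩ ℤ^d`. -/
def Epar {d : ℕ} (v : Fin d → (Fin d → ℤ)) : Set (Fin d → ℤ) :=
  {x | intToReal x ∈ parSet v}

lemma intToReal_injective {d : ℕ} : Function.Injective (intToReal (d := d)) := by
  intro a b h
  funext i
  have := congrFun h i
  simp only [intToReal] at this
  exact_mod_cast this

/-- A lattice point lies in the topological interior of the simplicial cone `D`
if and only if it has a (necessarily unique) representation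
`z = (v₁ + ⋯ + v_d − x) + a₁v₁ + ⋯ + a_dv_d` with `x ∈ E` and `aᵢ ∈ ℤ₊`. -/
theorem stmt8 {d : ℕ} (v : Fin d → (Fin d → ℤ))
    (hv : LinearIndependent ℝ (fun i => intToReal (v i)))
    (z : Fin d → ℤ) :
    intToReal z ∈ interior (simpCone v) ↔
      ∃! p : (Fin d → ℤ) × (Fin d → ℕ),
        p.1 ∈ Epar v ∧ z = ((∑ i, v i) - p.1) + ∑ i, (p.2 i : ℤ) • v i := by
  classical
  rcases Nat.eq_zero_or_pos d with hd | hd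
  · subst hd
    constructor
    · intro _
      refine ⟨⟨fun i => i.elim0, fun i => i.elim0⟩, ⟨⟨fun i => i.elim0, ?_, ?_⟩, ?_⟩, ?_⟩
      · exact fun i => i.elim0
      · funext i; exact i.elim0
      · funext i; exact i.elim0
      · intro q _
        refine Prod.ext ?_ ?_ <;> funext i <;> exact i.elim0
    · intro _
      have : simpCone (fun i : Fin 0 => i.elim0) = Set.univ := by
        ext y
        simp only [Set.mem_univ, iff_true, simpCone, Set.mem_setOf_eq]
        exact ⟨fun i => i.elim0, fun i => i.elim0, by funext i; exact i.elim0⟩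
      have hs : simpCone v = Set.univ := by
        ext y
        simp only [Set.mem_univ, iff_true, simpCone, Set.mem_setOf_eq]
        exact ⟨fun i => i.elim0, fun i => i.elim0, by funext i; exact i.elim0⟩
      rw [hs, interior_univ]
      trivial
  haveI : Nonempty (Fin d) := ⟨⟨0, hd⟩⟩
  have hcard : Fintype.card (Fin d) = Module.finrank ℝ (Fin d → ℝ) := by
    simp [Module.finrank_fintype_fun_eq_card]
  set B : Module.Basis (Fin d) ℝ (Fin d → ℝ) := basisOfLinearIndependentOfCardEqFinrank hv hcard
    with hBdef
  have hB : ∀ i, B i = intToReal (v i) := fun i => by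
    rw [hBdef, coe_basisOfLinearIndependentOfCardEqFinrank]
  set φ : (Fin d → ℤ) → (Fin d → ℝ) := fun w => B.equivFun (intToReal w) with hφ
  have φinj : Function.Injective φ := fun a b h =>
    intToReal_injective (B.equivFun.injective h)
  have hrepr : ∀ (y : Fin d → ℝ) (c : Fin d → ℝ),
      (y = ∑ j, c j • intToReal (v j)) ↔ B.equivFun y = c := by
    intro y c
    have h1 : ∑ j, c j • intToReal (v j) = B.equivFun.symm c := by
      rw [B.equivFun_symm_apply]
      exact Finset.sum_congr rfl fun j _ => by rw [hB]
    rw [h1, eq_comm, LinearEquiv.symm_apply_eq, eq_comm]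
  have hcone : simpCone v = ⇑B.equivFun ⁻¹' (Set.pi Set.univ fun _ => Set.Ici (0:ℝ)) := by
    ext y
    simp only [simpCone, Set.mem_setOf_eq, Set.mem_preimage, Set.mem_pi, Set.mem_univ,
      Set.mem_Ici, true_implies]
    constructor
    · rintro ⟨c, hc, hy⟩
      rw [(hrepr y c).mp hy]
      exact hc
    · intro h
      exact ⟨B.equivFun y, h, (hrepr y _).mpr rfl⟩
  have hmem : intToReal z ∈ interior (simpCone v) ↔ ∀ i, 0 < φ z i := by
    have hH := (B.equivFun.toContinuousLinearEquiv.toHomeomorph.preimage_interior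
      (Set.pi Set.univ fun _ => Set.Ici (0:ℝ)))
    have hco : (⇑B.equivFun.toContinuousLinearEquiv.toHomeomorph : (Fin d → ℝ) → (Fin d → ℝ))
        = ⇑B.equivFun := rfl
    rw [hcone, ← hco, ← hH, interior_pi_set Set.finite_univ]
    simp only [interior_Ici, Set.mem_preimage, Set.mem_pi, Set.mem_univ, Set.mem_Ioi,
      true_implies, hco]
    exact Iff.rfl
  have hE : ∀ x : Fin d → ℤ, x ∈ Epar v ↔ ∀ i, 0 ≤ φ x i ∧ φ x i < 1 := by
    intro x
    simp only [Epar, parSet, Set.mem_setOf_eq]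
    constructor
    · rintro ⟨c, hc, hx⟩
      have : φ x = c := (hrepr _ c).mp hx
      rw [this]
      exact hc
    · intro h
      exact ⟨φ x, h, (hrepr _ _).mpr rfl⟩
  have hEq : ∀ (x : Fin d → ℤ) (a : Fin d → ℕ),
      (z = ((∑ i, v i) - x) + ∑ i, (a i : ℤ) • v i) ↔
      ∀ i, φ z i = 1 + (a i : ℝ) - φ x i := by
    intro x a
    have key : intToReal (((∑ i, v i) - x) + ∑ i, (a i : ℤ) • v i)
        = ((∑ i, intToReal (v i)) - intToReal x) + ∑ i, (a i : ℝ) • intToReal (v i) := by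
      funext k
      simp only [intToReal, Pi.add_apply, Pi.sub_apply, Finset.sum_apply, Pi.smul_apply,
        smul_eq_mul]
      push_cast
      ring
    have hφR : ∀ i, B.equivFun (((∑ j, intToReal (v j)) - intToReal x)
        + ∑ j, (a j : ℝ) • intToReal (v j)) i = 1 + (a i : ℝ) - φ x i := by
      intro i
      have e1 : ∀ j, intToReal (v j) = B j := fun j => (hB j).symm
      simp only [map_add, map_sub, map_sum, map_smul, Pi.add_apply, Pi.sub_apply,
        Finset.sum_apply, Pi.smul_apply, smul_eq_mul, e1, Module.Basis.equivFun_self]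
      rw [Finset.sum_ite_eq' Finset.univ i (fun _ => (1:ℝ))]
      have : ∑ j, (a j : ℝ) * (if j = i then (1:ℝ) else 0)
          = ∑ j, (if j = i then (a j : ℝ) else 0) := by
        refine Finset.sum_congr rfl fun j _ => by split <;> simp
      rw [this, Finset.sum_ite_eq' Finset.univ i (fun j => (a j : ℝ))]
      simp [hφ]
      ring
    constructor
    · intro h i
      have h2 : B.equivFun (intToReal z)
          = B.equivFun (intToReal (((∑ i, v i) - x) + ∑ i, (a i : ℤ) • v i)) := by
        rw [h]
      have h3 := congrFun h2 i
      rw [key, hφR i] at h3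
      exact h3
    · intro h
      apply intToReal_injective
      apply B.equivFun.injective
      funext i
      rw [key, hφR i]
      exact h i
  have huniq : ∀ p q : (Fin d → ℤ) × (Fin d → ℕ),
      (p.1 ∈ Epar v ∧ z = ((∑ i, v i) - p.1) + ∑ i, (p.2 i : ℤ) • v i) →
      (q.1 ∈ Epar v ∧ z = ((∑ i, v i) - q.1) + ∑ i, (q.2 i : ℤ) • v i) → p = q := by
    rintro p q ⟨hp1, hp2⟩ ⟨hq1, hq2⟩
    have hp2' := (hEq p.1 p.2).mp hp2
    have hq2' := (hEq q.1 q.2).mp hq2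
    have hp1' := (hE p.1).mp hp1
    have hq1' := (hE q.1).mp hq1
    have ha : p.2 = q.2 := by
      funext i
      have h1 := hp2' i
      have h2 := hq2' i
      obtain ⟨hpl, hpu⟩ := hp1' i
      obtain ⟨hql, hqu⟩ := hq1' i
      have e1 : (p.2 i : ℝ) < (q.2 i : ℝ) + 1 := by linarith
      have e2 : (q.2 i : ℝ) < (p.2 i : ℝ) + 1 := by linarith
      have f1 : p.2 i < q.2 i + 1 := by exact_mod_cast e1
      have f2 : q.2 i < p.2 i + 1 := by exact_mod_cast e2
      omega
    have hx : p.1 = q.1 := by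
      apply φinj
      funext i
      have h1 := hp2' i
      have h2 := hq2' i
      rw [ha] at h1
      linarith
    exact Prod.ext hx ha
  rw [hmem]
  constructor
  · intro hc
    set c : Fin d → ℝ := φ z with hcdef
    set a : Fin d → ℕ := fun i => (⌈c i⌉ - 1).toNat with hadef
    have hacast : ∀ i, (a i : ℝ) = (⌈c i⌉ : ℝ) - 1 := by
      intro i
      have h1 : (1:ℤ) ≤ ⌈c i⌉ := Int.one_le_ceil_iff.mpr (hc i)
      have : ((a i : ℤ)) = ⌈c i⌉ - 1 := by
        rw [hadef]; exact Int.toNat_of_nonneg (by omega)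
      exact_mod_cast congrArg (fun n : ℤ => (n : ℝ)) this
    set x : Fin d → ℤ := ((∑ i, v i) + ∑ i, (a i : ℤ) • v i) - z with hxdef
    have heq : z = ((∑ i, v i) - x) + ∑ i, (a i : ℤ) • v i := by
      rw [hxdef]; abel
    have hφx : ∀ i, φ x i = 1 + (a i : ℝ) - c i := by
      intro i
      have := (hEq x a).mp heq i
      linarith
    refine ⟨⟨x, a⟩, ⟨?_, heq⟩, fun q hq => huniq q ⟨x, a⟩ hq ⟨?_, heq⟩⟩
    all_goals {
      rw [hE]
      intro i
      rw [hφx i, hacast i]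
      constructor
      · have := Int.le_ceil (c i); linarith
      · have := Int.ceil_lt_add_one (c i); linarith
    }
  · rintro ⟨p, ⟨hp1, hp2⟩, _⟩
    intro i
    have h1 := (hEq p.1 p.2).mp hp2 i
    have h2 := ((hE p.1).mp hp1 i).2
    have h3 : (0:ℝ) ≤ (p.2 i : ℝ) := Nat.cast_nonneg _
    linarith
end

section
/- Let M be a finitely generated additive submonoid of ℤ^d and λ : ℤ^d → ℤ a group homomorphism with λ(u) = 0 for all u ∈ U(M). Let B ⊆ M be a system of generators of M modulo U(M), and let B_∞ be the smallest subset of ℤ^d containing B and closed under the operation: if x, y ∈ B_∞ with λ(x) > 0, λ(y) < 0 and x + y ≠ 0, then x + y ∈ B_∞. Set M⁺ = {m ∈ M : λ(m) ≥ 0}. Then U(M⁺) = U(M), and {x ∈ B_∞ : λ(x) ≥ 0} is a system of generators of M⁺ modulo U(M⁺). -/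
/-- `M⁺ = {m ∈ M : λ(m) ≥ 0}`, as an additive submonoid. -/
def posPart {d : ℕ} (M : AddSubmonoid (Fin d → ℤ)) (lam : (Fin d → ℤ) →+ ℤ) :
    AddSubmonoid (Fin d → ℤ) where
  carrier := {m | m ∈ M ∧ 0 ≤ lam m}
  zero_mem' := ⟨M.zero_mem, by simp⟩
  add_mem' := by
    rintro a b ⟨haM, ha⟩ ⟨hbM, hb⟩
    exact ⟨M.add_mem haM hbM, by rw [map_add]; omega⟩

/-- `T` is closed under the operation of the dual algorithm: for `x, y ∈ T` with
`λ(x) > 0`, `λ(y) < 0` and `x + y ≠ 0`, also `x + y ∈ T`. -/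
def SumClosed {d : ℕ} (lam : (Fin d → ℤ) →+ ℤ) (T : Set (Fin d → ℤ)) : Prop :=
  ∀ x ∈ T, ∀ y ∈ T, 0 < lam x → lam y < 0 → x + y ≠ 0 → x + y ∈ T

/-- Key combinatorial lemma: a sum of elements of `Binf` with nonnegative `λ`-value
lies in the closure of the nonnegative part of `Binf`. -/
lemma key_lemma {d : ℕ} (lam : (Fin d → ℤ) →+ ℤ) (Binf : Set (Fin d → ℤ))
    (hB2 : SumClosed lam Binf)
    (hne : ∀ x ∈ Binf, ∀ y ∈ Binf, 0 < lam x → lam y < 0 → x + y ≠ 0) :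
    ∀ n : ℕ, ∀ L : Multiset (Fin d → ℤ), Multiset.card L = n →
      (∀ x ∈ L, x ∈ Binf) → 0 ≤ lam L.sum →
      L.sum ∈ AddSubmonoid.closure {x ∈ Binf | 0 ≤ lam x} := by
  intro n
  induction n using Nat.strong_induction_on with
  | _ n ih =>
    intro L hcard hmem hsum
    by_cases hall : ∀ x ∈ L, 0 ≤ lam x
    · exact AddSubmonoid.multiset_sum_mem _ L fun x hx =>
        AddSubmonoid.subset_closure ⟨hmem x hx, hall x hx⟩
    · push_neg at hall
      obtain ⟨y, hyL, hy⟩ := hall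
      -- find an element with positive lambda
      have hpos : ∃ x ∈ L, 0 < lam x := by
        by_contra h
        push_neg at h
        have h1 : L = y ::ₘ L.erase y := (Multiset.cons_erase hyL).symm
        have h2 : lam ((L.erase y).sum) ≤ 0 := by
          have hneg : (0:ℤ) ≤ ((L.erase y).map (fun w => -lam w)).sum := by
            apply Multiset.sum_nonneg
            intro z hz
            obtain ⟨w, hw, rfl⟩ := Multiset.mem_map.mp hz
            have := h w (Multiset.mem_of_mem_erase hw)
            omega
          have hmap : ((L.erase y).map (fun w => -lam w)).sum
              = -((L.erase y).map lam).sum := by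
            rw [← Multiset.sum_map_neg', Multiset.map_map]
            rfl
          have : ((L.erase y).map lam).sum ≤ 0 := by omega
          rwa [← map_multiset_sum] at this
        have : lam L.sum < 0 := by
          rw [h1, Multiset.sum_cons, map_add]
          omega
        omega
      obtain ⟨x, hxL, hx⟩ := hpos
      have hxy : x ≠ y := by rintro rfl; omega
      have hyL' : y ∈ L.erase x := (Multiset.mem_erase_of_ne (Ne.symm hxy)).mpr hyL
      set L' := (L.erase x).erase y with hL'
      have hLrep : L = x ::ₘ y ::ₘ L' := by
        rw [hL', Multiset.cons_erase hyL', Multiset.cons_erase hxL]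
      have hxB := hmem x hxL
      have hyB := hmem y hyL
      have hxyB : x + y ∈ Binf := hB2 x hxB y hyB hx hy (hne x hxB y hyB hx hy)
      have hcard' : Multiset.card ((x + y) ::ₘ L') = n - 1 := by
        have := congrArg Multiset.card hLrep
        simp only [Multiset.card_cons] at this ⊢
        omega
      have hn1 : n - 1 < n := by
        have := congrArg Multiset.card hLrep
        simp only [Multiset.card_cons] at this
        omega
      have hsum' : ((x + y) ::ₘ L').sum = L.sum := by
        rw [hLrep]; simp [Multiset.sum_cons, add_assoc]
      have := ih (n - 1) hn1 ((x + y) ::ₘ L') hcard'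
        (by
          intro z hz
          rcases Multiset.mem_cons.mp hz with rfl | hz'
          · exact hxyB
          · exact hmem z (hLrep ▸ Multiset.mem_cons_of_mem (Multiset.mem_cons_of_mem hz')))
        (by rw [hsum']; exact hsum)
      rwa [hsum'] at this

/-- Correctness of the dual (Pottier) algorithm, case (a): `λ` vanishes on `U(M)`. -/
theorem stmt11 {d : ℕ} (M : AddSubmonoid (Fin d → ℤ)) (hFG : M.FG)
    (lam : (Fin d → ℤ) →+ ℤ) (hlam : ∀ u ∈ unitSet M, lam u = 0)
    (B : Set (Fin d → ℤ)) (hB : IsGenModUnits M B)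
    (Binf : Set (Fin d → ℤ))
    (hB1 : B ⊆ Binf) (hB2 : SumClosed lam Binf)
    (hB3 : ∀ T : Set (Fin d → ℤ), B ⊆ T → SumClosed lam T → Binf ⊆ T) :
    unitSet (posPart M lam) = unitSet M ∧
    IsGenModUnits (posPart M lam) {x ∈ Binf | 0 ≤ lam x} := by
  obtain ⟨hBM, hBgen⟩ := hB
  -- Binf ⊆ M
  have hBinfM : Binf ⊆ (M : Set (Fin d → ℤ)) := by
    apply hB3
    · exact hBM
    · intro x hx y hy _ _ _
      exact M.add_mem hx hy
  -- units part
  have hunits : unitSet (posPart M lam) = unitSet M := by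
    ext u
    constructor
    · rintro ⟨⟨h1, _⟩, ⟨h2, _⟩⟩
      exact ⟨h1, h2⟩
    · rintro ⟨h1, h2⟩
      have h0 : lam u = 0 := hlam u ⟨h1, h2⟩
      refine ⟨⟨h1, by omega⟩, ⟨h2, ?_⟩⟩
      rw [map_neg]; omega
  refine ⟨hunits, ?_, ?_⟩
  · rintro x ⟨hx1, hx2⟩
    exact ⟨hBinfM hx1, hx2⟩
  · rintro m ⟨hmM, hm⟩
    obtain ⟨s, hs, u, huU, rfl⟩ := hBgen m hmM
    have hlu : lam u = 0 := hlam u huU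
    have hls : 0 ≤ lam s := by rw [map_add] at hm; omega
    -- decompose s as a multiset sum of elements of B
    obtain ⟨L, hLB, hLsum⟩ := AddSubmonoid.exists_multiset_of_mem_closure hs
    have hne : ∀ x ∈ Binf, ∀ y ∈ Binf, 0 < lam x → lam y < 0 → x + y ≠ 0 := by
      intro x hx y hy hlx hly heq
      have hyx : y = -x := by
        have := congrArg (· - x) heq
        simpa [add_sub_cancel_left] using by linear_combination (norm := abel) heq
      have : lam x = 0 := hlam x ⟨hBinfM hx, hyx ▸ hBinfM hy⟩
      omega
    have hsH : s ∈ AddSubmonoid.closure {x ∈ Binf | 0 ≤ lam x} := by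
      rw [← hLsum]
      exact key_lemma lam Binf hB2 hne (Multiset.card L) L rfl
        (fun x hx => hB1 (hLB x hx)) (by rw [hLsum]; exact hls)
    refine ⟨s, hsH, u, ?_, rfl⟩
    rw [hunits]; exact huU
end

section
/- For a subset C ⊆ ℝ^d the following are equivalent: (i) there exist finitely many linear forms λ₁,…,λ_m on ℝ^d with rational coefficients (with respect to the standard basis) such that C = {x ∈ ℝ^d : λᵢ(x) ≥ 0 for all i}; (ii) there exist x₁,…,xₙ ∈ ℚ^d such that C = ℝ₊x₁ + ⋯ + ℝ₊xₙ, the set of linear combinations of the xᵢ with nonnegative real coefficients. -/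
namespace MW

variable {d : ℕ}

/-- rational dot product -/
def dq (q v : Fin d → ℚ) : ℚ := ∑ j, q j * v j

/-- real pairing of a rational form with a real vector -/
def dr (q : Fin d → ℚ) (x : Fin d → ℝ) : ℝ := ∑ j, (q j : ℝ) * x j

def castV (v : Fin d → ℚ) : Fin d → ℝ := fun j => (v j : ℝ)

lemma dr_castV (q v : Fin d → ℚ) : dr q (castV v) = (dq q v : ℝ) := by
  simp [dr, dq, castV]

lemma dr_add (q : Fin d → ℚ) (x y : Fin d → ℝ) : dr q (x + y) = dr q x + dr q y := by
  simp [dr, mul_add, Finset.sum_add_distrib]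

lemma dr_smul (q : Fin d → ℚ) (t : ℝ) (x : Fin d → ℝ) : dr q (t • x) = t * dr q x := by
  simp [dr, Finset.mul_sum]; ring_nf
  exact Finset.sum_congr rfl fun j _ => by ring

lemma dr_sum (q : Fin d → ℚ) {ι : Type} (s : Finset ι) (f : ι → (Fin d → ℝ)) :
    dr q (∑ i ∈ s, f i) = ∑ i ∈ s, dr q (f i) := by
  classical
  induction s using Finset.induction with
  | empty => simp [dr]
  | @insert a s' h ih => simp [Finset.sum_insert h, dr_add, ih]

/-- H-set: intersection of rational halfspaces -/
def Hs {ι : Type} [Fintype ι] (q : ι → (Fin d → ℚ)) : Set (Fin d → ℝ) :=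
  {x | ∀ i, 0 ≤ dr (q i) x}

/-- V-set: cone generated by rational vectors -/
def Vs {ι : Type} [Fintype ι] (v : ι → (Fin d → ℚ)) : Set (Fin d → ℝ) :=
  {x | ∃ c : ι → ℝ, (∀ i, 0 ≤ c i) ∧ x = ∑ i, c i • castV (v i)}

lemma Vs_reindex {ι ι' : Type} [Fintype ι] [Fintype ι'] (e : ι' ≃ ι)
    (v : ι → (Fin d → ℚ)) : Vs (v ∘ e) = Vs v := by
  ext x
  constructor
  · rintro ⟨c, hc, rfl⟩
    refine ⟨c ∘ e.symm, fun i => hc _, ?_⟩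
    simp only [Function.comp]
    rw [← Equiv.sum_comp e (fun i => c (e.symm i) • castV (v i))]
    simp
  · rintro ⟨c, hc, rfl⟩
    refine ⟨c ∘ e, fun i => hc _, ?_⟩
    simp only [Function.comp]
    rw [← Equiv.sum_comp e (fun i => c i • castV (v i))]

lemma Hs_reindex {ι ι' : Type} [Fintype ι] [Fintype ι'] (e : ι' ≃ ι)
    (q : ι → (Fin d → ℚ)) : Hs (q ∘ e) = Hs q := by
  ext x
  constructor
  · intro h i; simpa using h (e.symm i)
  · intro h i; exact h (e i)

/-- if every generator of `v'` lies in the cone of `v`, then `Vs v' ⊆ Vs v` -/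
lemma Vs_subset {ι ι' : Type} [Fintype ι] [Fintype ι'] (v : ι → (Fin d → ℚ))
    (v' : ι' → (Fin d → ℚ)) (h : ∀ k, castV (v' k) ∈ Vs v) : Vs v' ⊆ Vs v := by
  classical
  rintro x ⟨c, hc, rfl⟩
  choose M hM hMe using h
  refine ⟨fun i => ∑ k, c k * M k i, fun i => Finset.sum_nonneg fun k _ => mul_nonneg (hc k) (hM k i), ?_⟩
  simp only [hMe, Finset.smul_sum]
  rw [Finset.sum_comm]
  refine Finset.sum_congr rfl fun i _ => ?_
  rw [Finset.sum_smul]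
  refine Finset.sum_congr rfl fun k _ => ?_
  rw [smul_smul]


section Comb
variable {ι : Type} [Fintype ι]

/-- good/bad index type for the Fourier–Motzkin combination step -/
abbrev Idx (f : ι → Fin d → ℚ) (g : Fin d → ℚ) : Type :=
  {i // 0 ≤ dq g (f i)} ⊕ ({i // 0 ≤ dq g (f i)} × {j // dq g (f j) < 0})

/-- the combined family -/
def comb (f : ι → Fin d → ℚ) (g : Fin d → ℚ) : Idx f g → Fin d → ℚ
  | .inl i => f i.1
  | .inr (i, j) => fun l => dq g (f i.1) * f j.1 l - dq g (f j.1) * f i.1 l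

lemma dq_bilin (g u w : Fin d → ℚ) (s t : ℚ) :
    dq g (fun l => s * u l - t * w l) = s * dq g u - t * dq g w := by
  simp only [dq, Finset.mul_sum, mul_sub]
  rw [Finset.sum_sub_distrib]
  congr 1 <;> exact Finset.sum_congr rfl fun l _ => by ring

lemma dr_bilin (u w : Fin d → ℚ) (s t : ℚ) (x : Fin d → ℝ) :
    dr (fun l => s * u l - t * w l) x = (s : ℝ) * dr u x - (t : ℝ) * dr w x := by
  simp only [dr, Finset.mul_sum]
  rw [← Finset.sum_sub_distrib]
  exact Finset.sum_congr rfl fun l _ => by push_cast; ring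

omit [Fintype ι] in
lemma castV_comb_inr (f : ι → Fin d → ℚ) (g : Fin d → ℚ) (i : {i // 0 ≤ dq g (f i)})
    (j : {j // dq g (f j) < 0}) :
    castV (comb f g (.inr (i, j))) =
      ((dq g (f i.1) : ℚ) : ℝ) • castV (f j.1) - ((dq g (f j.1) : ℚ) : ℝ) • castV (f i.1) := by
  funext l
  simp only [castV, comb, Pi.sub_apply, Pi.smul_apply, smul_eq_mul]
  push_cast
  ring

lemma mem_Vs_single (v : ι → Fin d → ℚ) (i : ι) : castV (v i) ∈ Vs v := by
  classical
  refine ⟨fun i' => if i' = i then 1 else 0, fun i' => by positivity, ?_⟩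
  rw [Finset.sum_eq_single i (fun b _ hb => by simp [hb]) (by simp)]
  simp

lemma dr_sub (q : Fin d → ℚ) (x y : Fin d → ℝ) : dr q (x - y) = dr q x - dr q y := by
  simp only [dr, Pi.sub_apply, mul_sub]
  rw [Finset.sum_sub_distrib]


lemma dq_comb_inr (f : ι → Fin d → ℚ) (g : Fin d → ℚ) (i : {i // 0 ≤ dq g (f i)})
    (j : {j // dq g (f j) < 0}) : dq g (comb f g (.inr (i, j))) = 0 := by
  show dq g (fun l => dq g (f i.1) * f j.1 l - dq g (f j.1) * f i.1 l) = 0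
  rw [dq_bilin]
  ring

/-- every generator of the combined family lies in the original cone -/
lemma comb_mem_Vs (v : ι → Fin d → ℚ) (q : Fin d → ℚ) (k : Idx v q) :
    castV (comb v q k) ∈ Vs v := by
  classical
  obtain (i | ⟨i, j⟩) := k
  · exact mem_Vs_single v i.1
  · have hij : i.1 ≠ j.1 := fun h => absurd (h ▸ i.2) (not_le.mpr j.2)
    refine ⟨fun l => (if l = j.1 then ((dq q (v i.1) : ℚ) : ℝ) else 0) +
      (if l = i.1 then ((-(dq q (v j.1)) : ℚ) : ℝ) else 0), fun l => ?_, ?_⟩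
    · have h1 : (0:ℝ) ≤ ((dq q (v i.1) : ℚ) : ℝ) := by exact_mod_cast i.2
      have h2 : (0:ℝ) ≤ ((-(dq q (v j.1)) : ℚ) : ℝ) := by
        rw [Rat.cast_nonneg]; linarith [j.2]
      dsimp only
      split_ifs <;> simp_all <;> linarith
    · rw [castV_comb_inr]
      simp only [add_smul, ite_smul, zero_smul]
      rw [Finset.sum_add_distrib, Finset.sum_ite_eq' Finset.univ j.1,
        Finset.sum_ite_eq' Finset.univ i.1]
      simp only [Finset.mem_univ, if_true]
      push_cast
      module

/-- Lemma I, hard direction: an element of the cone on which the form is nonnegative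
lies in the combined cone. -/
lemma cap_subset_comb (v : ι → Fin d → ℚ) (q : Fin d → ℚ) :
    Vs v ∩ {x | 0 ≤ dr q x} ⊆ Vs (comb v q) := by
  classical
  rintro x ⟨⟨c, hc, hxe⟩, hx⟩
  set A : ι → ℝ := fun i => ((dq q (v i) : ℚ) : ℝ) with hA
  set S : ℝ := dr q x with hSdef
  have hX : ∀ i, dr q (c i • castV (v i)) = c i * A i := fun i => by
    rw [dr_smul, dr_castV]
  have hSsum : S = ∑ i, c i * A i := by
    rw [hSdef, hxe, dr_sum]; exact Finset.sum_congr rfl fun i _ => hX i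
  set G : Finset ι := Finset.univ.filter (fun i => 0 ≤ dq q (v i)) with hG
  set B : Finset ι := Finset.univ.filter (fun i => ¬ 0 ≤ dq q (v i)) with hB
  set P : ℝ := ∑ i ∈ G, c i * A i with hP
  have hAG : ∀ i ∈ G, 0 ≤ A i := fun i hi => by
    rw [hA]; simp only [Rat.cast_nonneg]
    exact (Finset.mem_filter.mp hi).2
  have hAB : ∀ j ∈ B, A j < 0 := fun j hj => by
    rw [hA]; simp only
    exact_mod_cast not_le.mp (Finset.mem_filter.mp hj).2
  have hP0 : 0 ≤ P := Finset.sum_nonneg fun i hi => mul_nonneg (hc i) (hAG i hi)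
  have hsplit : P + ∑ j ∈ B, c j * A j = S := by
    rw [hP, hSsum]
    exact Finset.sum_filter_add_sum_filter_not _ _ _
  have hGsub : ∀ i', i' ∈ G ↔ 0 ≤ dq q (v i') := fun i' => by simp [hG]
  have hBsub : ∀ j', j' ∈ B ↔ dq q (v j') < 0 := fun j' => by simp [hB, not_le]
  rcases eq_or_lt_of_le hP0 with hPz | hPpos
  · -- P = 0 : all bad coefficients vanish
    have hQ0 : ∑ j ∈ B, c j * A j = 0 := by
      have h1 : ∑ j ∈ B, c j * A j ≤ 0 :=
        Finset.sum_nonpos fun j hj => mul_nonpos_of_nonneg_of_nonpos (hc j) (hAB j hj).le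
      have h2 : 0 ≤ ∑ j ∈ B, c j * A j := by
        have hS0 : (0:ℝ) ≤ S := hx
        have := hsplit; rw [← hPz] at this; linarith
      linarith
    have hcB : ∀ j ∈ B, c j = 0 := by
      intro j hj
      have := (Finset.sum_eq_zero_iff_of_nonpos
        (fun j hj => mul_nonpos_of_nonneg_of_nonpos (hc j) (hAB j hj).le)).mp hQ0 j hj
      rcases mul_eq_zero.mp this with h | h
      · exact h
      · exact absurd h (ne_of_lt (hAB j hj))
    refine ⟨Sum.elim (fun i => c i.1) (fun _ => 0), fun k => by
      rcases k with i | p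
      · exact hc i.1
      · exact le_refl 0, ?_⟩
    rw [Fintype.sum_sum_type]
    simp only [Sum.elim_inl, Sum.elim_inr, zero_smul, Finset.sum_const_zero, add_zero]
    have e1 : ∑ i : {i // 0 ≤ dq q (v i)}, c i.1 • castV (comb v q (.inl i)) =
        ∑ i ∈ G, c i • castV (v i) :=
      (Finset.sum_subtype G hGsub (fun i => c i • castV (v i))).symm
    rw [e1, hxe, ← Finset.sum_filter_add_sum_filter_not Finset.univ (fun i => 0 ≤ dq q (v i))]
    have e2 : ∑ j ∈ B, c j • castV (v j) = 0 :=
      Finset.sum_eq_zero fun j hj => by rw [hcB j hj, zero_smul]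
    rw [← hG, ← hB, e2, add_zero]
  · -- P > 0 : main combination
    refine ⟨Sum.elim (fun i => c i.1 * S / P) (fun p => c p.1.1 * c p.2.1 / P), fun k => by
      rcases k with i | p
      · exact div_nonneg (mul_nonneg (hc i.1) hx) hP0
      · exact div_nonneg (mul_nonneg (hc p.1.1) (hc p.2.1)) hP0, ?_⟩
    funext l
    have goalswap : ∀ (Lhs : ℝ), Lhs = x l → x l = Lhs := fun _ h => h.symm
    rw [Fintype.sum_sum_type]
    simp only [Sum.elim_inl, Sum.elim_inr]
    simp only [Pi.add_apply, Finset.sum_apply, Pi.smul_apply, smul_eq_mul]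
    refine goalswap _ ?_
    have e1 : ∑ i : {i // 0 ≤ dq q (v i)}, c i.1 * S / P * castV (comb v q (.inl i)) l =
        ∑ i ∈ G, c i * S / P * castV (v i) l :=
      (Finset.sum_subtype G hGsub (fun i => c i * S / P * castV (v i) l)).symm
    have e2 : ∑ p : {i // 0 ≤ dq q (v i)} × {j // dq q (v j) < 0},
        c p.1.1 * c p.2.1 / P * castV (comb v q (.inr p)) l =
        ∑ i ∈ G, ∑ j ∈ B, c i * c j / P * (A i * castV (v j) l - A j * castV (v i) l) := by
      rw [Fintype.sum_prod_type]
      dsimp only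
      calc ∑ i : {i // 0 ≤ dq q (v i)}, ∑ j : {j // dq q (v j) < 0},
            c i.1 * c j.1 / P * castV (comb v q (.inr (i, j))) l
          = ∑ i : {i // 0 ≤ dq q (v i)}, ∑ j ∈ B,
            c i.1 * c j / P * (A i.1 * castV (v j) l - A j * castV (v i.1) l) := by
            refine Finset.sum_congr rfl fun i _ => ?_
            calc ∑ j : {j // dq q (v j) < 0},
                  c i.1 * c j.1 / P * castV (comb v q (.inr (i, j))) l
                = ∑ j : {j // dq q (v j) < 0},
                  c i.1 * c j.1 / P * (A i.1 * castV (v j.1) l - A j.1 * castV (v i.1) l) := by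
                  refine Finset.sum_congr rfl fun j _ => ?_
                  rw [castV_comb_inr]
                  simp only [Pi.sub_apply, Pi.smul_apply, smul_eq_mul, hA]
              _ = ∑ j ∈ B, c i.1 * c j / P * (A i.1 * castV (v j) l - A j * castV (v i.1) l) :=
                  (Finset.sum_subtype B hBsub
                    (fun j => c i.1 * c j / P * (A i.1 * castV (v j) l - A j * castV (v i.1) l))).symm
        _ = ∑ i ∈ G, ∑ j ∈ B, c i * c j / P * (A i * castV (v j) l - A j * castV (v i) l) :=
            (Finset.sum_subtype G hGsub (fun i => ∑ j ∈ B,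
              c i * c j / P * (A i * castV (v j) l - A j * castV (v i) l))).symm
    rw [e1, e2]
    have hQ : ∑ j ∈ B, c j * A j = S - P := by linarith [hsplit]
    have hterm : ∀ i ∈ G, ∀ j ∈ B,
        c i * c j / P * (A i * castV (v j) l - A j * castV (v i) l) =
        (c i * A i) * (c j * castV (v j) l) * P⁻¹ -
          (c i * castV (v i) l) * (c j * A j) * P⁻¹ := fun i _ j _ => by
      field_simp
    have hPne : P ≠ 0 := ne_of_gt hPpos
    calc ∑ i ∈ G, c i * S / P * castV (v i) l +
          ∑ i ∈ G, ∑ j ∈ B, c i * c j / P * (A i * castV (v j) l - A j * castV (v i) l)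
        = (∑ i ∈ G, c i * castV (v i) l) * S * P⁻¹ +
          ((∑ i ∈ G, c i * A i) * (∑ j ∈ B, c j * castV (v j) l) * P⁻¹ -
           (∑ i ∈ G, c i * castV (v i) l) * (∑ j ∈ B, c j * A j) * P⁻¹) := by
          congr 1
          · rw [Finset.sum_mul, Finset.sum_mul]
            exact Finset.sum_congr rfl fun i _ => by field_simp
          · calc ∑ i ∈ G, ∑ j ∈ B, c i * c j / P * (A i * castV (v j) l - A j * castV (v i) l)
                = ∑ i ∈ G, ∑ j ∈ B, ((c i * A i) * (c j * castV (v j) l) * P⁻¹ -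
                    (c i * castV (v i) l) * (c j * A j) * P⁻¹) :=
                  Finset.sum_congr rfl fun i hi => Finset.sum_congr rfl fun j hj => hterm i hi j hj
              _ = (∑ i ∈ G, ∑ j ∈ B, (c i * A i) * (c j * castV (v j) l) * P⁻¹) -
                  ∑ i ∈ G, ∑ j ∈ B, (c i * castV (v i) l) * (c j * A j) * P⁻¹ := by
                  rw [← Finset.sum_sub_distrib]
                  exact Finset.sum_congr rfl fun i _ => by rw [Finset.sum_sub_distrib]
              _ = (∑ i ∈ G, c i * A i) * (∑ j ∈ B, c j * castV (v j) l) * P⁻¹ -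
                  (∑ i ∈ G, c i * castV (v i) l) * (∑ j ∈ B, c j * A j) * P⁻¹ := by
                  congr 1
                  · rw [Finset.sum_mul_sum, Finset.sum_mul]
                    exact Finset.sum_congr rfl fun i _ => by rw [Finset.sum_mul]
                  · rw [Finset.sum_mul_sum, Finset.sum_mul]
                    exact Finset.sum_congr rfl fun i _ => by rw [Finset.sum_mul]
      _ = ∑ i ∈ G, c i * castV (v i) l + ∑ j ∈ B, c j * castV (v j) l := by
          rw [← hP, hQ]
          field_simp
          ring
      _ = ∑ i, c i * castV (v i) l := Finset.sum_filter_add_sum_filter_not _ _ _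
      _ = x l := by
          rw [hxe]
          simp only [Finset.sum_apply, Pi.smul_apply, smul_eq_mul]

lemma dq_comm (a b : Fin d → ℚ) : dq a b = dq b a :=
  Finset.sum_congr rfl fun l _ => mul_comm _ _

/-- Lemma I: intersecting a finitely generated cone with a rational halfspace. -/
lemma cap_eq (v : ι → Fin d → ℚ) (q : Fin d → ℚ) :
    Vs v ∩ {x | 0 ≤ dr q x} = Vs (comb v q) := by
  apply Set.Subset.antisymm (cap_subset_comb v q)
  intro x hx
  refine ⟨Vs_subset v (comb v q) (comb_mem_Vs v q) hx, ?_⟩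
  obtain ⟨c, hc, rfl⟩ := hx
  show 0 ≤ dr q _
  rw [dr_sum]
  refine Finset.sum_nonneg fun k _ => ?_
  rw [dr_smul, dr_castV]
  refine mul_nonneg (hc k) ?_
  rcases k with i | ⟨i, j⟩
  · exact_mod_cast i.2
  · rw [dq_comb_inr]; simp

/-- Lemma II: adding a rational ray to a finite intersection of rational halfspaces. -/
lemma addRay_eq (q : ι → Fin d → ℚ) (w : Fin d → ℚ) :
    {x | ∃ y ∈ Hs q, ∃ t : ℝ, 0 ≤ t ∧ x = y + t • castV w} = Hs (comb q w) := by
  classical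
  ext x
  constructor
  · rintro ⟨y, hy, t, ht, rfl⟩
    rintro (i | ⟨i, j⟩)
    · show 0 ≤ dr (q i.1) _
      rw [dr_add, dr_smul, dr_castV, dq_comm]
      have : (0:ℝ) ≤ ((dq w (q i.1) : ℚ) : ℝ) := by exact_mod_cast i.2
      have := mul_nonneg ht this
      have := hy i.1
      linarith
    · show 0 ≤ dr (fun l => dq w (q i.1) * q j.1 l - dq w (q j.1) * q i.1 l) _
      rw [dr_bilin, dr_add, dr_add, dr_smul, dr_smul, dr_castV, dr_castV,
        dq_comm (q j.1) w, dq_comm (q i.1) w]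
      have hAi : (0:ℝ) ≤ ((dq w (q i.1) : ℚ) : ℝ) := by exact_mod_cast i.2
      have hAj : ((dq w (q j.1) : ℚ) : ℝ) < 0 := by exact_mod_cast j.2
      have h1 := mul_nonneg hAi (hy j.1)
      have h2 := mul_nonneg (neg_nonneg.mpr hAj.le) (hy i.1)
      nlinarith [hy i.1, hy j.1]
  · intro hx
    set A : ι → ℝ := fun i => ((dq w (q i) : ℚ) : ℝ) with hA
    set B : Finset ι := Finset.univ.filter (fun j => dq w (q j) < 0) with hB
    have hxv : ∀ (i : ι) (h : 0 ≤ dq w (q i)), 0 ≤ dr (q i) x := fun i h =>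
      hx (Sum.inl ⟨i, h⟩)
    have hxp : ∀ (i : ι) (hi : 0 ≤ dq w (q i)) (j : ι) (hj : dq w (q j) < 0),
        0 ≤ A i * dr (q j) x - A j * dr (q i) x := by
      intro i hi j hj
      have := hx (Sum.inr (⟨i, hi⟩, ⟨j, hj⟩))
      have h' : (0:ℝ) ≤ dr (fun l => dq w (q i) * q j l - dq w (q j) * q i l) x := this
      rwa [dr_bilin] at h'
    set g : ι → ℝ := fun j => dr (q j) x / A j with hg
    set t : ℝ := if h : B.Nonempty then max 0 (B.sup' h g) else 0 with htdef
    have ht0 : 0 ≤ t := by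
      rw [htdef]; split
      · exact le_max_left 0 _
      · exact le_refl 0
    have htB : ∀ j ∈ B, g j ≤ t := by
      intro j hj
      rw [htdef, dif_pos ⟨j, hj⟩]
      exact le_trans (Finset.le_sup' g hj) (le_max_right 0 _)
    have htG : ∀ i, 0 < A i → t ≤ dr (q i) x / A i := by
      intro i hAi
      have hQi : (0:ℚ) ≤ dq w (q i) := by
        have : (0:ℝ) < ((dq w (q i) : ℚ) : ℝ) := hAi
        exact_mod_cast this.le
      have hdri : 0 ≤ dr (q i) x := hxv i hQi
      rw [htdef]; split
      · refine max_le (div_nonneg hdri hAi.le) (Finset.sup'_le _ g fun j hj => ?_)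
        have hjQ : dq w (q j) < 0 := (Finset.mem_filter.mp hj).2
        have hAj : A j < 0 := by show ((dq w (q j) : ℚ) : ℝ) < 0; exact_mod_cast hjQ
        have key := hxp i hQi j hjQ
        rw [hg]
        dsimp only
        rw [le_div_iff₀ hAi, div_mul_eq_mul_div, div_le_iff_of_neg hAj]
        nlinarith
      · exact div_nonneg hdri hAi.le
    refine ⟨x - t • castV w, ?_, t, ht0, by abel⟩
    intro i
    have hdr : dr (q i) (x - t • castV w) = dr (q i) x - t * A i := by
      rw [dr_sub, dr_smul, dr_castV, dq_comm]
    rw [hdr]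
    rcases lt_trichotomy (A i) 0 with hAi | hAi | hAi
    · have hiQ : dq w (q i) < 0 := by
        have : ((dq w (q i) : ℚ) : ℝ) < 0 := hAi
        exact_mod_cast this
      have hiB : i ∈ B := by rw [hB]; simp [hiQ]
      have := htB i hiB
      rw [hg] at this
      dsimp only at this
      rw [div_le_iff_of_neg hAi] at this
      linarith
    · have hiQ : (0:ℚ) ≤ dq w (q i) := by
        have : ((dq w (q i) : ℚ) : ℝ) = 0 := hAi
        exact_mod_cast this.ge
      have := hxv i hiQ
      rw [hAi]
      linarith
    · have := htG i hAi
      rw [le_div_iff₀ hAi] at this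
      linarith

end Comb

/-- the ± standard basis -/
def pmBasis (d : ℕ) : (Fin d ⊕ Fin d) → Fin d → ℚ :=
  Sum.elim (fun j l => if l = j then 1 else 0) (fun j l => if l = j then -1 else 0)

lemma Vs_pmBasis : Vs (pmBasis d) = Set.univ := by
  classical
  refine Set.eq_univ_of_forall fun x => ?_
  refine ⟨Sum.elim (fun j => max (x j) 0) (fun j => max (-x j) 0), ?_, ?_⟩
  · rintro (j | j) <;> exact le_max_right _ _
  · funext l
    rw [Fintype.sum_sum_type]
    simp only [Sum.elim_inl, Sum.elim_inr, Pi.add_apply, Finset.sum_apply,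
      Pi.smul_apply, smul_eq_mul, pmBasis, castV]
    simp only [apply_ite (fun r : ℚ => (r : ℝ)), Rat.cast_one, Rat.cast_neg, Rat.cast_zero]
    rw [Finset.sum_eq_single l (fun b _ hb => by rw [if_neg (Ne.symm hb), mul_zero]) (by simp),
      Finset.sum_eq_single l (fun b _ hb => by rw [if_neg (Ne.symm hb), mul_zero]) (by simp)]
    simp only [if_pos rfl]
    rcases le_total (x l) 0 with h | h
    · rw [max_eq_right h, max_eq_left (by linarith)]; simp
    · rw [max_eq_left h, max_eq_right (by linarith)]; simp

lemma dr_pm (x : Fin d → ℝ) (j : Fin d) :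
    dr (fun l => if l = j then (1:ℚ) else 0) x = x j ∧
    dr (fun l => if l = j then (-1:ℚ) else 0) x = -(x j) := by
  classical
  constructor <;>
  · unfold dr
    rw [Finset.sum_eq_single j (fun b _ hb => by simp [hb]) (by simp)]
    simp

lemma Hs_pmBasis : Hs (pmBasis d) = {0} := by
  classical
  ext x
  simp only [Hs, Set.mem_setOf_eq, Set.mem_singleton_iff]
  constructor
  · intro h
    funext j
    have h1 := h (Sum.inl j)
    have h2 := h (Sum.inr j)
    rw [show pmBasis d (Sum.inl j) = fun l => if l = j then (1:ℚ) else 0 from rfl,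
      (dr_pm x j).1] at h1
    rw [show pmBasis d (Sum.inr j) = fun l => if l = j then (-1:ℚ) else 0 from rfl,
      (dr_pm x j).2] at h2
    show x j = 0
    linarith
  · rintro rfl (j | j)
    · rw [show pmBasis d (Sum.inl j) = fun l => if l = j then (1:ℚ) else 0 from rfl,
        (dr_pm 0 j).1]
      simp
    · rw [show pmBasis d (Sum.inr j) = fun l => if l = j then (-1:ℚ) else 0 from rfl,
        (dr_pm 0 j).2]
      simp

lemma Vs_empty (v : Fin 0 → Fin d → ℚ) : Vs v = {0} := by
  ext x
  simp only [Vs, Set.mem_setOf_eq, Set.mem_singleton_iff]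
  constructor
  · rintro ⟨c, _, rfl⟩; simp
  · rintro rfl; exact ⟨fun i => i.elim0, fun i => i.elim0, by simp⟩

lemma Hs_empty (q : Fin 0 → Fin d → ℚ) : Hs q = Set.univ :=
  Set.eq_univ_of_forall fun x i => i.elim0

lemma Hs_succ {m : ℕ} (q : Fin (m + 1) → Fin d → ℚ) :
    Hs q = Hs (q ∘ Fin.succ) ∩ {x | 0 ≤ dr (q 0) x} := by
  ext x
  simp only [Hs, Set.mem_setOf_eq, Set.mem_inter_iff, Fin.forall_fin_succ, Function.comp]
  tauto

lemma Vs_succ {n : ℕ} (v : Fin (n + 1) → Fin d → ℚ) :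
    Vs v = {x | ∃ y ∈ Vs (v ∘ Fin.succ), ∃ t : ℝ, 0 ≤ t ∧ x = y + t • castV (v 0)} := by
  ext x
  constructor
  · rintro ⟨c, hc, rfl⟩
    refine ⟨∑ i : Fin n, c i.succ • castV (v i.succ), ⟨c ∘ Fin.succ, fun i => hc _, rfl⟩,
      c 0, hc 0, ?_⟩
    rw [Fin.sum_univ_succ]
    exact add_comm _ _
  · rintro ⟨y, ⟨c', hc', rfl⟩, t, ht, rfl⟩
    refine ⟨Fin.cons t c', fun i => ?_, ?_⟩
    · refine Fin.cases ht (fun i => ?_) i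
      rw [Fin.cons_succ]
      exact hc' i
    · rw [Fin.sum_univ_succ, Fin.cons_zero]
      simp only [Fin.cons_succ]
      exact (add_comm _ _)

lemma HtoV (m : ℕ) (q : Fin m → Fin d → ℚ) :
    ∃ (n : ℕ) (v : Fin n → Fin d → ℚ), Hs q = Vs v := by
  induction m with
  | zero =>
    refine ⟨d + d, pmBasis d ∘ finSumFinEquiv.symm, ?_⟩
    rw [Hs_empty, Vs_reindex finSumFinEquiv.symm (pmBasis d), Vs_pmBasis]
  | succ m ih =>
    obtain ⟨n, v, hv⟩ := ih (q ∘ Fin.succ)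
    refine ⟨Fintype.card (Idx v (q 0)),
      comb v (q 0) ∘ (Fintype.equivFin (Idx v (q 0))).symm, ?_⟩
    rw [Hs_succ, hv, cap_eq v (q 0),
      Vs_reindex (Fintype.equivFin (Idx v (q 0))).symm (comb v (q 0))]

lemma VtoH (n : ℕ) (v : Fin n → Fin d → ℚ) :
    ∃ (m : ℕ) (q : Fin m → Fin d → ℚ), Vs v = Hs q := by
  induction n with
  | zero =>
    refine ⟨d + d, pmBasis d ∘ finSumFinEquiv.symm, ?_⟩
    rw [Vs_empty, Hs_reindex finSumFinEquiv.symm (pmBasis d), Hs_pmBasis]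
  | succ n ih =>
    obtain ⟨m, q, hq⟩ := ih (v ∘ Fin.succ)
    refine ⟨Fintype.card (Idx q (v 0)),
      comb q (v 0) ∘ (Fintype.equivFin (Idx q (v 0))).symm, ?_⟩
    rw [Vs_succ, hq, addRay_eq q (v 0),
      Hs_reindex (Fintype.equivFin (Idx q (v 0))).symm (comb q (v 0))]

end MW

/-- The theorem of Minkowski–Weyl: a subset `C ⊆ ℝ^d` is a finite intersection of
rational linear halfspaces if and only if it is the cone generated by finitely many
rational vectors. -/
theorem stmt18 {d : ℕ} (C : Set (Fin d → ℝ)) :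
    (∃ (m : ℕ) (q : Fin m → (Fin d → ℚ)),
        C = {x | ∀ i, 0 ≤ ∑ j, (q i j : ℝ) * x j}) ↔
    (∃ (n : ℕ) (v : Fin n → (Fin d → ℚ)),
        C = {y | ∃ c : Fin n → ℝ, (∀ i, 0 ≤ c i) ∧
          y = ∑ i, c i • (fun j => ((v i j : ℚ) : ℝ))}) := by
  constructor
  · rintro ⟨m, q, rfl⟩
    obtain ⟨n, v, h⟩ := MW.HtoV m q
    exact ⟨n, v, h⟩
  · rintro ⟨n, v, rfl⟩
    obtain ⟨m, q, h⟩ := MW.VtoH n v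
    exact ⟨m, q, h⟩
end
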